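/- For x₁ ≤ x₂ ≤ ... ≤ xₙ in [a,b], and for any two circular n-permutations σ, τ with the same pinnacle set and the same vale set, the products ∏_{i=1}^n G(x_{σ(i)}, x_{σ(i+1)}) and ∏_{i=1}^n G(x_{τ(i)}, x_{τ(i+1)}) are equal, where G(s,t) = -(1/W)·ψ₋(min{s,t})·ψ₊(max{s,t}). -/

import Mathlib

set_option autoImplicit false

/-- The set of pinnacle values of the circular `n`-permutation `σ` (as positions' values
in `Fin n`, which is order-isomorphic to `{1, …, n}`). -/
def pinnacleSet (n : ℕ) (σ : Equiv.Perm (Fin n)) : Finset (Fin n) :=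
  (Finset.univ.filter fun i : Fin n =>
      σ ((finRotate n).symm i) < σ i ∧ σ (finRotate n i) < σ i).image σ

/-- The set of vale values of the circular `n`-permutation `σ`. -/
def valeSet (n : ℕ) (σ : Equiv.Perm (Fin n)) : Finset (Fin n) :=
  (Finset.univ.filter fun i : Fin n =>
      σ i < σ ((finRotate n).symm i) ∧ σ i < σ (finRotate n i)).image σ

namespace CyclicAux

open Finset

lemma rot_ne {n : ℕ} (hn : 2 ≤ n) (i : Fin n) : finRotate n i ≠ i := by
  obtain ⟨m, rfl⟩ : ∃ m, n = m + 2 := ⟨n - 2, by omega⟩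
  rw [finRotate_succ_apply]
  intro h
  have h1 : (1 : Fin (m+2)) = 0 := by
    have := add_left_cancel (a := i) (b := 1) (c := 0) (by simpa using h)
    simpa using this
  simp [Fin.ext_iff] at h1

lemma rot_symm_ne {n : ℕ} (hn : 2 ≤ n) (i : Fin n) : (finRotate n).symm i ≠ i := by
  intro h
  have := congrArg (finRotate n) h
  rw [Equiv.apply_symm_apply] at this
  exact rot_ne hn i this.symm

/-- Generic product-by-fibers lemma. -/
lemma prod_comp_count {n : ℕ} (g : Fin n → ℝ) (f f' : Fin n → Fin n)
    (h : ∀ j, (univ.filter fun i => f i = j).card = (univ.filter fun i => f' i = j).card) :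
    ∏ i, g (f i) = ∏ i, g (f' i) := by
  have key : ∀ F : Fin n → Fin n,
      ∏ i, g (F i) = ∏ j, g j ^ (univ.filter fun i => F i = j).card := by
    intro F
    rw [← Finset.prod_fiberwise_of_maps_to (g := F) (fun x _ => mem_univ (F x))
      (fun i => g (F i))]
    refine Finset.prod_congr rfl fun j _ => ?_
    rw [Finset.prod_congr rfl (fun i hi => by rw [(mem_filter.mp hi).2]), Finset.prod_const]
  rw [key f, key f']
  exact Finset.prod_congr rfl fun j _ => by rw [h j]

lemma card_pair_filter {n : ℕ} (u v : Fin n) (huv : u ≠ v) (P Q : Prop)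
    [Decidable P] [Decidable Q] :
    (univ.filter fun i => (i = u ∧ P) ∨ (i = v ∧ Q)).card
      = (if P then 1 else 0) + (if Q then 1 else 0) := by
  by_cases hP : P <;> by_cases hQ : Q
  · rw [show (univ.filter fun i => (i = u ∧ P) ∨ (i = v ∧ Q)) = {u, v} from by
      ext i; simp [hP, hQ]]
    simp [Finset.card_pair huv, hP, hQ]
  · rw [show (univ.filter fun i => (i = u ∧ P) ∨ (i = v ∧ Q)) = {u} from by
      ext i; simp [hP, hQ]]
    simp [hP, hQ]
  · rw [show (univ.filter fun i => (i = u ∧ P) ∨ (i = v ∧ Q)) = {v} from by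
      ext i; simp [hP, hQ]]
    simp [hP, hQ]
  · rw [show (univ.filter fun i => (i = u ∧ P) ∨ (i = v ∧ Q)) = ∅ from by
      ext i; simp [hP, hQ]]
    simp [hP, hQ]

lemma mem_valeSet {n : ℕ} {σ : Equiv.Perm (Fin n)} {j : Fin n} :
    j ∈ valeSet n σ ↔
      (j < σ ((finRotate n).symm (σ.symm j)) ∧ j < σ (finRotate n (σ.symm j))) := by
  unfold valeSet
  simp only [Finset.mem_image, Finset.mem_filter, Finset.mem_univ, true_and]
  constructor
  · rintro ⟨i, ⟨h1, h2⟩, rfl⟩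
    simpa [-finRotate_apply, -finRotate_symm_apply] using ⟨h1, h2⟩
  · intro h
    exact ⟨σ.symm j, by simpa using h, by simp⟩

lemma mem_pinnacleSet {n : ℕ} {σ : Equiv.Perm (Fin n)} {j : Fin n} :
    j ∈ pinnacleSet n σ ↔
      (σ ((finRotate n).symm (σ.symm j)) < j ∧ σ (finRotate n (σ.symm j)) < j) := by
  unfold pinnacleSet
  simp only [Finset.mem_image, Finset.mem_filter, Finset.mem_univ, true_and]
  constructor
  · rintro ⟨i, ⟨h1, h2⟩, rfl⟩
    simpa [-finRotate_apply, -finRotate_symm_apply] using ⟨h1, h2⟩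
  · intro h
    exact ⟨σ.symm j, by simpa using h, by simp⟩

section count

variable {n : ℕ}

lemma min_eq_iff (hn : 2 ≤ n) (σ : Equiv.Perm (Fin n)) (j : Fin n) (i : Fin n) :
    min (σ i) (σ (finRotate n i)) = j ↔
      (i = σ.symm j ∧ j < σ (finRotate n (σ.symm j))) ∨
      (i = (finRotate n).symm (σ.symm j) ∧ j < σ ((finRotate n).symm (σ.symm j))) := by
  have hne : σ i ≠ σ (finRotate n i) := fun h => rot_ne hn i (σ.injective h.symm)
  constructor
  · intro h
    rcases lt_or_gt_of_ne hne with hlt | hlt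
    · left
      have hj : σ i = j := by rw [← h, min_eq_left hlt.le]
      have hi : i = σ.symm j := by rw [← hj, Equiv.symm_apply_apply]
      refine ⟨hi, ?_⟩
      rw [hj] at hlt
      rw [← hi]
      exact hlt
    · right
      have hj : σ (finRotate n i) = j := by rw [← h, min_eq_right hlt.le]
      have hi : finRotate n i = σ.symm j := by rw [← hj, Equiv.symm_apply_apply]
      have hi' : i = (finRotate n).symm (σ.symm j) := by rw [← hi, Equiv.symm_apply_apply]
      refine ⟨hi', ?_⟩
      rw [hj] at hlt
      rw [← hi']
      exact hlt
  · rintro (⟨rfl, hc⟩ | ⟨rfl, hc⟩)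
    · rw [Equiv.apply_symm_apply, min_eq_left hc.le]
    · rw [Equiv.apply_symm_apply, min_eq_right ?_]
      · rw [Equiv.apply_symm_apply]
      · rw [Equiv.apply_symm_apply]; exact hc.le

lemma max_eq_iff (hn : 2 ≤ n) (σ : Equiv.Perm (Fin n)) (j : Fin n) (i : Fin n) :
    max (σ i) (σ (finRotate n i)) = j ↔
      (i = σ.symm j ∧ σ (finRotate n (σ.symm j)) < j) ∨
      (i = (finRotate n).symm (σ.symm j) ∧ σ ((finRotate n).symm (σ.symm j)) < j) := by
  have hne : σ i ≠ σ (finRotate n i) := fun h => rot_ne hn i (σ.injective h.symm)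
  constructor
  · intro h
    rcases lt_or_gt_of_ne hne with hlt | hlt
    · right
      have hj : σ (finRotate n i) = j := by rw [← h, max_eq_right hlt.le]
      have hi : finRotate n i = σ.symm j := by rw [← hj, Equiv.symm_apply_apply]
      have hi' : i = (finRotate n).symm (σ.symm j) := by rw [← hi, Equiv.symm_apply_apply]
      refine ⟨hi', ?_⟩
      rw [hj] at hlt
      rw [← hi']
      exact hlt
    · left
      have hj : σ i = j := by rw [← h, max_eq_left hlt.le]
      have hi : i = σ.symm j := by rw [← hj, Equiv.symm_apply_apply]
      refine ⟨hi, ?_⟩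
      rw [hj] at hlt
      rw [← hi]
      exact hlt
  · rintro (⟨rfl, hc⟩ | ⟨rfl, hc⟩)
    · rw [Equiv.apply_symm_apply, max_eq_left hc.le]
    · rw [Equiv.apply_symm_apply, max_eq_right ?_]
      · rw [Equiv.apply_symm_apply]
      · rw [Equiv.apply_symm_apply]; exact hc.le

lemma ne_ru (hn : 2 ≤ n) (σ : Equiv.Perm (Fin n)) (j : Fin n) : σ (finRotate n (σ.symm j)) ≠ j := by
  intro h
  have : finRotate n (σ.symm j) = σ.symm j := by
    apply σ.injective; rw [h, Equiv.apply_symm_apply]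
  exact rot_ne hn _ this

lemma ne_v (hn : 2 ≤ n) (σ : Equiv.Perm (Fin n)) (j : Fin n) : σ ((finRotate n).symm (σ.symm j)) ≠ j := by
  intro h
  have : (finRotate n).symm (σ.symm j) = σ.symm j := by
    apply σ.injective; rw [h, Equiv.apply_symm_apply]
  exact rot_symm_ne hn _ this

lemma huv (hn : 2 ≤ n) (σ : Equiv.Perm (Fin n)) (j : Fin n) : σ.symm j ≠ (finRotate n).symm (σ.symm j) :=
  fun h => rot_symm_ne hn (σ.symm j) h.symm

lemma min_count (hn : 2 ≤ n) (σ : Equiv.Perm (Fin n)) (j : Fin n) :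
    (univ.filter fun i => min (σ i) (σ (finRotate n i)) = j).card
      = if j ∈ valeSet n σ then 2 else if j ∈ pinnacleSet n σ then 0 else 1 := by
  have e : (univ.filter fun i => min (σ i) (σ (finRotate n i)) = j)
      = univ.filter fun i =>
        (i = σ.symm j ∧ j < σ (finRotate n (σ.symm j))) ∨
        (i = (finRotate n).symm (σ.symm j) ∧ j < σ ((finRotate n).symm (σ.symm j))) := by
    ext i
    simp only [Finset.mem_filter, Finset.mem_univ, true_and]
    exact min_eq_iff hn σ j i
  rw [e, card_pair_filter _ _ (huv hn σ j)]
  by_cases hc1 : j < σ (finRotate n (σ.symm j)) <;>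
    by_cases hc2 : j < σ ((finRotate n).symm (σ.symm j))
  · rw [if_pos (mem_valeSet.2 ⟨hc2, hc1⟩)]
    simp [hc1, hc2, -finRotate_apply, -finRotate_symm_apply]
  · have h2 : σ ((finRotate n).symm (σ.symm j)) < j :=
      lt_of_le_of_ne (not_lt.mp hc2) (ne_v hn σ j)
    rw [if_neg (fun h => hc2 (mem_valeSet.1 h).1),
      if_neg (fun h => absurd (mem_pinnacleSet.1 h).2 (not_lt.mpr hc1.le))]
    simp [hc1, hc2, -finRotate_apply, -finRotate_symm_apply]
  · have h1 : σ (finRotate n (σ.symm j)) < j :=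
      lt_of_le_of_ne (not_lt.mp hc1) (ne_ru hn σ j)
    rw [if_neg (fun h => hc1 (mem_valeSet.1 h).2),
      if_neg (fun h => absurd (mem_pinnacleSet.1 h).1 (not_lt.mpr hc2.le))]
    simp [hc1, hc2, -finRotate_apply, -finRotate_symm_apply]
  · have h1 : σ (finRotate n (σ.symm j)) < j :=
      lt_of_le_of_ne (not_lt.mp hc1) (ne_ru hn σ j)
    have h2 : σ ((finRotate n).symm (σ.symm j)) < j :=
      lt_of_le_of_ne (not_lt.mp hc2) (ne_v hn σ j)
    rw [if_neg (fun h => hc1 (mem_valeSet.1 h).2), if_pos (mem_pinnacleSet.2 ⟨h2, h1⟩)]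
    simp [hc1, hc2, -finRotate_apply, -finRotate_symm_apply]

lemma max_count (hn : 2 ≤ n) (σ : Equiv.Perm (Fin n)) (j : Fin n) :
    (univ.filter fun i => max (σ i) (σ (finRotate n i)) = j).card
      = if j ∈ pinnacleSet n σ then 2 else if j ∈ valeSet n σ then 0 else 1 := by
  have e : (univ.filter fun i => max (σ i) (σ (finRotate n i)) = j)
      = univ.filter fun i =>
        (i = σ.symm j ∧ σ (finRotate n (σ.symm j)) < j) ∨
        (i = (finRotate n).symm (σ.symm j) ∧ σ ((finRotate n).symm (σ.symm j)) < j) := by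
    ext i
    simp only [Finset.mem_filter, Finset.mem_univ, true_and]
    exact max_eq_iff hn σ j i
  rw [e, card_pair_filter _ _ (huv hn σ j)]
  by_cases hc1 : σ (finRotate n (σ.symm j)) < j <;>
    by_cases hc2 : σ ((finRotate n).symm (σ.symm j)) < j
  · rw [if_pos (mem_pinnacleSet.2 ⟨hc2, hc1⟩)]
    simp [hc1, hc2, -finRotate_apply, -finRotate_symm_apply]
  · have h2 : j < σ ((finRotate n).symm (σ.symm j)) :=
      lt_of_le_of_ne (not_lt.mp hc2) (Ne.symm (ne_v hn σ j))
    rw [if_neg (fun h => hc2 (mem_pinnacleSet.1 h).1),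
      if_neg (fun h => absurd (mem_valeSet.1 h).2 (not_lt.mpr hc1.le))]
    simp [hc1, hc2, -finRotate_apply, -finRotate_symm_apply]
  · have h1 : j < σ (finRotate n (σ.symm j)) :=
      lt_of_le_of_ne (not_lt.mp hc1) (Ne.symm (ne_ru hn σ j))
    rw [if_neg (fun h => hc1 (mem_pinnacleSet.1 h).2),
      if_neg (fun h => absurd (mem_valeSet.1 h).1 (not_lt.mpr hc2.le))]
    simp [hc1, hc2, -finRotate_apply, -finRotate_symm_apply]
  · have h1 : j < σ (finRotate n (σ.symm j)) :=
      lt_of_le_of_ne (not_lt.mp hc1) (Ne.symm (ne_ru hn σ j))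
    have h2 : j < σ ((finRotate n).symm (σ.symm j)) :=
      lt_of_le_of_ne (not_lt.mp hc2) (Ne.symm (ne_v hn σ j))
    rw [if_neg (fun h => hc1 (mem_pinnacleSet.1 h).2), if_pos (mem_valeSet.2 ⟨h2, h1⟩)]
    simp [hc1, hc2, -finRotate_apply, -finRotate_symm_apply]

end count

end CyclicAux

/-- For `x₁ ≤ x₂ ≤ ⋯ ≤ xₙ` in `[a, b]` and circular `n`-permutations `σ`, `τ` with the
same pinnacle set and the same vale set, the two cyclic products of values of
`G(s,t) = -(1/W)·ψ₋(min{s,t})·ψ₊(max{s,t})` coincide. -/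
theorem cyclic_products_eq_of_same_pinnacles_vales
    (n : ℕ) (a b : ℝ) (x : Fin n → ℝ) (hx : Monotone x)
    (hxab : ∀ i, x i ∈ Set.Icc a b)
    (ψm ψp : ℝ → ℝ) (W : ℝ) (hW : W ≠ 0)
    (G : ℝ → ℝ → ℝ)
    (hG : ∀ s t, G s t = -(1 / W) * ψm (min s t) * ψp (max s t))
    (σ τ : Equiv.Perm (Fin n))
    (hP : pinnacleSet n σ = pinnacleSet n τ) (hV : valeSet n σ = valeSet n τ) :
    ∏ i : Fin n, G (x (σ i)) (x (σ (finRotate n i)))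
      = ∏ i : Fin n, G (x (τ i)) (x (τ (finRotate n i))) := by
  rcases Nat.lt_or_ge n 2 with hn | hn
  · interval_cases n
    · simp
    · rw [Subsingleton.elim σ τ]
  · have key : ∀ ρ : Equiv.Perm (Fin n),
        ∏ i : Fin n, G (x (ρ i)) (x (ρ (finRotate n i)))
          = (-(1 / W)) ^ n *
            ((∏ i : Fin n, ψm (x (min (ρ i) (ρ (finRotate n i))))) *
              ∏ i : Fin n, ψp (x (max (ρ i) (ρ (finRotate n i))))) := by
      intro ρ
      have : ∀ i : Fin n, G (x (ρ i)) (x (ρ (finRotate n i)))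
          = -(1 / W) * ψm (x (min (ρ i) (ρ (finRotate n i))))
              * ψp (x (max (ρ i) (ρ (finRotate n i)))) := by
        intro i
        rw [hG, hx.map_min, hx.map_max]
      rw [Finset.prod_congr rfl fun i _ => this i, Finset.prod_mul_distrib,
        Finset.prod_mul_distrib, Finset.prod_const]
      simp [mul_assoc]
    rw [key σ, key τ]
    congr 1
    congr 1
    · exact CyclicAux.prod_comp_count (fun j => ψm (x j)) _ _ fun j => by
        rw [CyclicAux.min_count hn σ j, CyclicAux.min_count hn τ j, hP, hV]
    · exact CyclicAux.prod_comp_count (fun j => ψp (x j)) _ _ fun j => by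
        rw [CyclicAux.max_count hn σ j, CyclicAux.max_count hn τ j, hP, hV]
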